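/- Let X, Y be finite nonempty sets, f : X × Y → {−1,1} with f⁻¹(1) and f⁻¹(−1) both nonempty, and δ > 0. Suppose that for every probability distribution σ on X × Y with Σ_{(x,y)} σ(x,y)·f(x,y) = 0 there exists a rectangle R with Σ_{(x,y)∈R} σ(x,y)·f(x,y) ≥ δ/3. Then there exists a probability distribution ρ on the (finite) set of all rectangles of X × Y such that for every (x₁,y₁) with f(x₁,y₁) = 1 and every (x₂,y₂) with f(x₂,y₂) = −1, Pr_{R∼ρ}[(x₁,y₁) ∈ R] − Pr_{R∼ρ}[(x₂,y₂) ∈ R] ≥ (2/3)·δ. -/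

import Mathlib

/-- Via the minimax theorem: if for every balanced distribution `σ` some rectangle has
correlation at least `δ/3` with `f`, then there is a distribution `ρ` on rectangles such that
every `1`-input of `f` is covered with probability exceeding that of every `(−1)`-input by at
least `(2/3)·δ`. -/
theorem minimax_distribution_on_rectangles
    (X Y : Type) [Fintype X] [Fintype Y] [Nonempty X] [Nonempty Y] [DecidableEq X] [DecidableEq Y]
    (f : X → Y → ℝ) (hf : ∀ x y, f x y = 1 ∨ f x y = -1)
    (hpos : ∃ p : X × Y, f p.1 p.2 = 1) (hneg : ∃ p : X × Y, f p.1 p.2 = -1)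
    (δ : ℝ) (hδ : 0 < δ)
    (hcorr : ∀ σ : X × Y → ℝ, (∀ p, 0 ≤ σ p) → (∑ p : X × Y, σ p) = 1 →
      (∑ p : X × Y, σ p * f p.1 p.2) = 0 →
      ∃ (A : Finset X) (B : Finset Y), δ / 3 ≤ (∑ p ∈ A ×ˢ B, σ p * f p.1 p.2)) :
    ∃ ρ : Finset X × Finset Y → ℝ,
      (∀ R, 0 ≤ ρ R) ∧ (∑ R : Finset X × Finset Y, ρ R) = 1 ∧
      ∀ x₁ y₁ x₂ y₂, f x₁ y₁ = 1 → f x₂ y₂ = -1 →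
        (2 / 3) * δ ≤
          (∑ R : Finset X × Finset Y, if x₁ ∈ R.1 ∧ y₁ ∈ R.2 then ρ R else 0) -
          (∑ R : Finset X × Finset Y, if x₂ ∈ R.1 ∧ y₂ ∈ R.2 then ρ R else 0) := by
  classical
  by_contra hgoal
  push_neg at hgoal
  set I := (X × Y) × (X × Y) with hI
  let good : I → Prop := fun i => f i.1.1 i.1.2 = 1 ∧ f i.2.1 i.2.2 = -1
  let vec : Finset X × Finset Y → I → ℝ := fun R i =>
    (if i.1.1 ∈ R.1 ∧ i.1.2 ∈ R.2 then (1:ℝ) else 0) -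
    (if i.2.1 ∈ R.1 ∧ i.2.2 ∈ R.2 then (1:ℝ) else 0)
  let L : ((Finset X × Finset Y) → ℝ) →ₗ[ℝ] (I → ℝ) :=
    { toFun := fun ρ => ∑ R, ρ R • vec R
      map_add' := by intro a b; simp [add_smul, Finset.sum_add_distrib]
      map_smul' := by intro c a; simp [smul_smul, Finset.smul_sum]
      }
  let S := stdSimplex ℝ (Finset X × Finset Y)
  let C := L '' S
  let Q : Set (I → ℝ) := {w | ∀ i, good i → 2/3*δ ≤ w i}
  have hLapp : ∀ ρ i, L ρ i = ∑ R, ρ R * vec R i := by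
    intro ρ i
    show (∑ R, ρ R • vec R) i = _
    simp [Finset.sum_apply]
  have hCconv : Convex ℝ C := (convex_stdSimplex ℝ _).linear_image L
  have hCcomp : IsCompact C :=
    (isCompact_stdSimplex _ _).image L.continuous_of_finiteDimensional
  have hQconv : Convex ℝ Q := by
    intro p hp q hq s t hs ht hst i hi
    have h1 := hp i hi
    have h2 := hq i hi
    have h3 : (s • p + t • q) i = s * p i + t * q i := by
      simp [smul_eq_mul]
    rw [h3]
    nlinarith
  have hQclosed : IsClosed Q := by
    have : Q = ⋂ (i : I) (_ : good i), {w : I → ℝ | 2/3*δ ≤ w i} := by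
      ext w; simp [Q, Set.mem_iInter]
    rw [this]
    exact isClosed_iInter fun i => isClosed_iInter fun _ =>
      isClosed_le continuous_const (continuous_apply i)
  have hdisj : Disjoint C Q := by
    rw [Set.disjoint_left]
    rintro c ⟨ρ, hρ, rfl⟩ hcQ
    obtain ⟨x₁, y₁, x₂, y₂, h1, h2, hlt⟩ := hgoal ρ (fun R => hρ.1 R) hρ.2
    have hg : good ((x₁,y₁),(x₂,y₂)) := ⟨h1, h2⟩
    have := hcQ ((x₁,y₁),(x₂,y₂)) hg
    rw [hLapp] at this
    have heq : (∑ R, ρ R * vec R ((x₁,y₁),(x₂,y₂))) =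
        (∑ R : Finset X × Finset Y, if x₁ ∈ R.1 ∧ y₁ ∈ R.2 then ρ R else 0) -
        (∑ R : Finset X × Finset Y, if x₂ ∈ R.1 ∧ y₂ ∈ R.2 then ρ R else 0) := by
      rw [← Finset.sum_sub_distrib]
      refine Finset.sum_congr rfl fun R _ => ?_
      simp only [vec, mul_sub, mul_ite, mul_one, mul_zero]
    rw [heq] at this
    exact absurd this (not_le.mpr hlt)
  obtain ⟨ℓ, a, b, hCa, hab, hQb⟩ :=
    geometric_hahn_banach_compact_closed hCconv hCcomp hQconv hQclosed hdisj
  -- coefficients of ℓ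
  let e : I → (I → ℝ) := fun i => Pi.single i (1:ℝ)
  let τ : I → ℝ := fun i => ℓ (e i)
  have hrep : ∀ w : I → ℝ, ℓ w = ∑ i, w i * τ i := by
    intro w
    have hw : w = ∑ i, w i • e i := by
      ext j
      simp [e, Finset.sum_apply, Pi.single_apply, eq_comm]
      rw [Finset.sum_ite_eq]; simp
    calc ℓ w = ℓ (∑ i, w i • e i) := by rw [← hw]
    _ = ∑ i, w i * τ i := by
        rw [map_sum]; refine Finset.sum_congr rfl fun i _ => ?_
        rw [map_smul]; simp [τ]
  -- the constant vector
  let w₀ : I → ℝ := fun _ => 2/3*δ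
  have hw₀Q : w₀ ∈ Q := fun i _ => le_refl _
  have hw₀ : b < ℓ w₀ := hQb _ hw₀Q
  have hτgood : ∀ i, good i → 0 ≤ τ i := by
    intro i hi
    by_contra hneg'
    push_neg at hneg'
    set t := (b - ℓ w₀) / τ i with ht
    have htpos : 0 ≤ t := le_of_lt (div_pos_of_neg_of_neg (by linarith) hneg')
    have hmem : w₀ + t • e i ∈ Q := by
      intro j hj
      by_cases hji : j = i
      · subst hji
        simp only [Pi.add_apply, Pi.smul_apply, smul_eq_mul, e, Pi.single_eq_same, mul_one]
        show 2/3*δ ≤ 2/3*δ + t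
        linarith
      · simp only [Pi.add_apply, Pi.smul_apply, smul_eq_mul, e, Pi.single_apply, hji, if_false,
          mul_zero, add_zero]
        exact le_refl _
    have h2 := hQb _ hmem
    rw [map_add, map_smul] at h2
    have h3 : b < ℓ w₀ + t * τ i := h2
    rw [ht, div_mul_cancel₀ _ (ne_of_lt hneg')] at h3
    linarith
  have hτbad : ∀ i, ¬ good i → τ i = 0 := by
    intro i hi
    by_contra hne
    set t := (b - 1 - ℓ w₀) / τ i with ht
    have hmem : w₀ + t • e i ∈ Q := by
      intro j hj
      by_cases hji : j = i
      · exact absurd (hji ▸ hj) hi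
      · simp only [Pi.add_apply, Pi.smul_apply, smul_eq_mul, e, Pi.single_apply, hji, if_false,
          mul_zero, add_zero]
        exact le_refl _
    have h2 := hQb _ hmem
    rw [map_add, map_smul] at h2
    have h3 : b < ℓ w₀ + t * τ i := h2
    rw [ht, div_mul_cancel₀ _ hne] at h3
    linarith
  have hτ0 : ∀ i, 0 ≤ τ i := by
    intro i
    by_cases hi : good i
    · exact hτgood i hi
    · rw [hτbad i hi]
  set s := ∑ i, τ i with hs
  have hs0 : 0 ≤ s := Finset.sum_nonneg fun i _ => hτ0 i
  have hℓw₀ : ℓ w₀ = 2/3*δ * s := by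
    rw [hrep, hs, Finset.mul_sum]
  -- a point of C for contradiction in the degenerate case
  have hCne : ∃ c ∈ C, True := by
    refine ⟨L (Pi.single (⊥ : Finset X × Finset Y) 1), ⟨_, single_mem_stdSimplex ℝ _, rfl⟩, trivial⟩
  have hspos : 0 < s := by
    rcases lt_or_eq_of_le hs0 with h | h
    · exact h
    · exfalso
      have hτz : ∀ i, τ i = 0 := by
        intro i
        have := (Finset.sum_eq_zero_iff_of_nonneg (fun i _ => hτ0 i)).mp h.symm
        exact this i (Finset.mem_univ i)
      obtain ⟨c, hc, -⟩ := hCne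
      have h1 : ℓ c < a := hCa c hc
      have h2 : b < ℓ w₀ := hw₀
      have hcz : ℓ c = 0 := by rw [hrep]; simp [hτz]
      have hwz : ℓ w₀ = 0 := by rw [hrep]; simp [hτz]
      linarith
  -- define σ
  let σ : X × Y → ℝ := fun p =>
    (∑ i : I, τ i * ((if i.1 = p then (1:ℝ) else 0) + (if i.2 = p then (1:ℝ) else 0))) / (2*s)
  have hσ0 : ∀ p, 0 ≤ σ p := by
    intro p
    apply div_nonneg _ (by linarith)
    apply Finset.sum_nonneg
    intro i _
    apply mul_nonneg (hτ0 i)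
    positivity
  have hσsum : (∑ p : X × Y, σ p) = 1 := by
    rw [← Finset.sum_div]
    rw [Finset.sum_comm]
    have : ∀ i : I, (∑ p : X × Y, τ i * ((if i.1 = p then (1:ℝ) else 0) + (if i.2 = p then (1:ℝ) else 0))) = 2 * τ i := by
      intro i
      rw [← Finset.mul_sum, Finset.sum_add_distrib]
      simp [Finset.sum_ite_eq]
      ring
    rw [Finset.sum_congr rfl fun i _ => this i, ← Finset.mul_sum]
    field_simp
    exact hs.symm
  have hσbal : (∑ p : X × Y, σ p * f p.1 p.2) = 0 := by
    have : ∀ p : X × Y, σ p * f p.1 p.2 =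
        (∑ i : I, τ i * ((if i.1 = p then (1:ℝ) else 0) + (if i.2 = p then (1:ℝ) else 0)) * f p.1 p.2) / (2*s) := by
      intro p
      rw [div_mul_eq_mul_div, Finset.sum_mul]
    rw [Finset.sum_congr rfl fun p _ => this p, ← Finset.sum_div, Finset.sum_comm]
    have hz : ∀ i : I, (∑ p : X × Y, τ i * ((if i.1 = p then (1:ℝ) else 0) + (if i.2 = p then (1:ℝ) else 0)) * f p.1 p.2) = 0 := by
      intro i
      by_cases hi : good i
      · have : ∀ p : X × Y, τ i * ((if i.1 = p then (1:ℝ) else 0) + (if i.2 = p then (1:ℝ) else 0)) * f p.1 p.2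
            = τ i * ((if i.1 = p then f p.1 p.2 else 0) + (if i.2 = p then f p.1 p.2 else 0)) := by
          intro p; simp only [mul_assoc, add_mul, ite_mul, one_mul, zero_mul]
        rw [Finset.sum_congr rfl fun p _ => this p, ← Finset.mul_sum, Finset.sum_add_distrib]
        have e1 : (∑ p : X × Y, if i.1 = p then f p.1 p.2 else 0) = f i.1.1 i.1.2 := by
          rw [Finset.sum_ite_eq]; simp
        have e2 : (∑ p : X × Y, if i.2 = p then f p.1 p.2 else 0) = f i.2.1 i.2.2 := by
          rw [Finset.sum_ite_eq]; simp
        rw [e1, e2, hi.1, hi.2]; ring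
      · simp [hτbad i hi]
    rw [Finset.sum_congr rfl fun i _ => hz i]
    simp
  obtain ⟨A, B, hAB⟩ := hcorr σ hσ0 hσsum hσbal
  -- compute the rectangle sum
  have hrect : (∑ p ∈ A ×ˢ B, σ p * f p.1 p.2) = ℓ (vec (A, B)) / (2*s) := by
    have expand : ∀ p : X × Y, σ p * f p.1 p.2 =
        (∑ i : I, τ i * ((if i.1 = p then (1:ℝ) else 0) + (if i.2 = p then (1:ℝ) else 0)) * f p.1 p.2) / (2*s) := by
      intro p; rw [div_mul_eq_mul_div, Finset.sum_mul]
    rw [Finset.sum_congr rfl fun p _ => expand p, ← Finset.sum_div, Finset.sum_comm]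
    congr 1
    rw [hrep]
    refine Finset.sum_congr rfl fun i _ => ?_
    have step : ∀ p : X × Y, τ i * ((if i.1 = p then (1:ℝ) else 0) + (if i.2 = p then (1:ℝ) else 0)) * f p.1 p.2
        = τ i * ((if i.1 = p then f p.1 p.2 else 0) + (if i.2 = p then f p.1 p.2 else 0)) := by
      intro p; simp only [mul_assoc, add_mul, ite_mul, one_mul, zero_mul]
    rw [Finset.sum_congr rfl fun p _ => step p, ← Finset.mul_sum, Finset.sum_add_distrib]
    by_cases hi : good i
    · have e1 : (∑ p ∈ A ×ˢ B, if i.1 = p then f p.1 p.2 else 0)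
          = if i.1.1 ∈ A ∧ i.1.2 ∈ B then f i.1.1 i.1.2 else 0 := by
        rw [Finset.sum_ite_eq]
        simp [Finset.mem_product]
      have e2 : (∑ p ∈ A ×ˢ B, if i.2 = p then f p.1 p.2 else 0)
          = if i.2.1 ∈ A ∧ i.2.2 ∈ B then f i.2.1 i.2.2 else 0 := by
        rw [Finset.sum_ite_eq]
        simp [Finset.mem_product]
      rw [e1, e2, hi.1, hi.2]
      simp only [vec]
      rw [mul_comm]
      congr 1
      split_ifs <;> ring
    · simp [hτbad i hi]
  -- the rectangle is a point of C
  have hvecC : vec (A, B) ∈ C := by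
    refine ⟨Pi.single (A, B) 1, single_mem_stdSimplex ℝ _, ?_⟩
    show (∑ R, (Pi.single (A,B) (1:ℝ) : (Finset X × Finset Y) → ℝ) R • vec R) = vec (A,B)
    simp [Pi.single_apply, ite_smul]
  have hlt : ℓ (vec (A,B)) < a := hCa _ hvecC
  have hfinal : ℓ (vec (A,B)) < 2/3*δ*s := by
    have := hw₀
    rw [hℓw₀] at this
    linarith
  rw [hrect] at hAB
  have : δ/3 * (2*s) ≤ ℓ (vec (A,B)) := by
    rw [le_div_iff₀ (by linarith)] at hAB
    linarith
  nlinarith
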